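/- Let n ≥ 1, let t_1, …, t_{n+1} be pairwise distinct real numbers, let L be the collocation matrix of the Newton basis at these nodes, and let J be the (n+1)×(n+1) diagonal matrix with diagonal entries J_{i,i} = (−1)^{i−1}. Then the matrix L·J is totally positive if and only if t_1 > t_2 > ⋯ > t_{n+1}. -/

import Mathlib

open Finset

/-- A square real matrix is totally positive if all its minors (determinants of
submatrices with strictly increasing row and column indices) are nonnegative. -/
def TotallyPositive {m : ℕ} (A : Matrix (Fin m) (Fin m) ℝ) : Prop :=
  ∀ (r : ℕ) (f g : Fin r → Fin m), StrictMono f → StrictMono g →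
    0 ≤ (A.submatrix f g).det

namespace NewtonTP

/-! ### Divided differences of the (reversed) Newton basis over consecutive windows -/

noncomputable def ddW (x : ℕ → ℝ) : ℕ → ℕ → ℕ → ℝ
  | 0, a, j => ∏ k ∈ Finset.range j, (x k - x a)
  | (s+1), a, j => (ddW x s (a+1) j - ddW x s a j) / (x (a+s+1) - x a)

lemma ddW_zero (x : ℕ → ℝ) (a j : ℕ) :
    ddW x 0 a j = ∏ k ∈ Finset.range j, (x k - x a) := rfl

lemma ddW_succ (x : ℕ → ℝ) (s a j : ℕ) :
    ddW x (s+1) a j = (ddW x s (a+1) j - ddW x s a j) / (x (a+s+1) - x a) := rfl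

variable {n : ℕ} {x : ℕ → ℝ}

lemma sub_ne' (hx : ∀ a b : ℕ, a < b → b ≤ n → x b < x a) {a b : ℕ} (h : a < b) (hb : b ≤ n) :
    x b - x a ≠ 0 := by have := hx a b h hb; intro h0; nlinarith

lemma L0 (x : ℕ → ℝ) (a j : ℕ) : ddW x 0 a (j+1) = (x j - x a) * ddW x 0 a j := by
  rw [ddW_zero, ddW_zero, Finset.prod_range_succ, mul_comm]

lemma L1 (hx : ∀ a b : ℕ, a < b → b ≤ n → x b < x a) : ∀ s a j : ℕ, a + s + 1 ≤ n →
    ddW x (s+1) a (j+1) = (x j - x a) * ddW x (s+1) a j - ddW x s (a+1) j := by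
  intro s
  induction s with
  | zero =>
    intro a j h
    have hΔ : x (a+0+1) - x a ≠ 0 := sub_ne' hx (by omega) (by omega)
    rw [ddW_succ, ddW_succ, L0, L0]
    field_simp
    ring
  | succ s ih =>
    intro a j h
    have hΔ : x (a+(s+1)+1) - x a ≠ 0 := sub_ne' hx (by omega) (by omega)
    have hΔ' : x (a+1+s+1) - x (a+1) ≠ 0 := sub_ne' hx (by omega) (by omega)
    have hrel : ddW x s (a+1+1) j - ddW x s (a+1) j
        = (x (a+1+s+1) - x (a+1)) * ddW x (s+1) (a+1) j := by
      rw [ddW_succ]; field_simp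
    rw [ddW_succ x (s+1) a (j+1), ddW_succ x (s+1) a j,
      ih (a+1) j (by omega), ih a j (by omega)]
    have e1 : a + 1 + s + 1 = a + (s+1) + 1 := by omega
    rw [e1] at hΔ' hrel
    field_simp
    linear_combination (-1 : ℝ) * hrel

lemma lowdeg (hx : ∀ a b : ℕ, a < b → b ≤ n → x b < x a) :
    ∀ j s a : ℕ, j < s → a + s ≤ n → ddW x s a j = 0 := by
  intro j
  induction j with
  | zero =>
    intro s
    induction s with
    | zero => intro a h; omega
    | succ s ihs =>
      intro a _ hle
      rw [ddW_succ]
      rcases Nat.eq_zero_or_pos s with hs | hs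
      · subst hs; simp [ddW_zero]
      · rw [ihs (a+1) (by omega) (by omega), ihs a (by omega) (by omega)]; simp
  | succ j ihj =>
    intro s a hlt hle
    obtain ⟨s', rfl⟩ : ∃ s', s = s' + 1 := ⟨s - 1, by omega⟩
    rw [L1 hx s' a (j) (by omega), ihj (s'+1) a (by omega) (by omega),
      ihj s' (a+1) (by omega) (by omega)]
    ring

lemma highcol : ∀ s a j : ℕ, a + s < j → ddW x s a j = 0 := by
  intro s
  induction s with
  | zero =>
    intro a j h
    rw [ddW_zero]
    exact Finset.prod_eq_zero (i := a) (Finset.mem_range.mpr (by omega)) (by simp)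
  | succ s ih =>
    intro a j h
    rw [ddW_succ, ih (a+1) j (by omega), ih a j (by omega)]
    simp

lemma diagval (hx : ∀ a b : ℕ, a < b → b ≤ n → x b < x a) :
    ∀ s a : ℕ, a + s ≤ n → ddW x s a s = (-1 : ℝ)^s := by
  intro s
  induction s with
  | zero => intro a _; simp [ddW_zero]
  | succ s ih =>
    intro a h
    rw [L1 hx s a s (by omega), lowdeg hx s (s+1) a (by omega) (by omega),
      ih (a+1) (by omega)]
    ring

/-! ### The pivot products and the Neville intermediate matrices -/

noncomputable def Pf (x : ℕ → ℝ) (c i : ℕ) : ℝ := ∏ k ∈ Finset.Ico (i - c) i, (x k - x i)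

noncomputable def Aent (x : ℕ → ℝ) (c i j : ℕ) : ℝ :=
  (-1)^(min c i) * Pf x (min c i) i * ddW x (min c i) (i - min c i) j

lemma Pf_zero (x : ℕ → ℝ) (i : ℕ) : Pf x 0 i = 1 := by simp [Pf]

lemma Pf_pos (hx : ∀ a b : ℕ, a < b → b ≤ n → x b < x a) {c i : ℕ} (hi : i ≤ n) :
    0 < Pf x c i := by
  apply Finset.prod_pos
  intro k hk
  rw [Finset.mem_Ico] at hk
  have := hx k i hk.2 hi
  linarith

lemma Pf_succ (x : ℕ → ℝ) {c i : ℕ} (h : c + 1 ≤ i) :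
    Pf x (c+1) i = (x (i - (c+1)) - x i) * Pf x c i := by
  unfold Pf
  rw [Finset.prod_eq_prod_Ico_succ_bot (by omega : i - (c+1) < i)]
  have e : i - (c+1) + 1 = i - c := by omega
  rw [e]

lemma Aent_zero (x : ℕ → ℝ) (i j : ℕ) : Aent x 0 i j = ddW x 0 i j := by
  simp [Aent, Pf_zero]

lemma Aent_small (x : ℕ → ℝ) {c i : ℕ} (h : i ≤ c) (j : ℕ) :
    Aent x c i j = Aent x (c+1) i j := by
  unfold Aent
  rw [min_eq_right h, min_eq_right (by omega)]

lemma F1 (hx : ∀ a b : ℕ, a < b → b ≤ n → x b < x a) (c a j : ℕ) (h : a + c + 1 ≤ n) :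
    Aent x c (a+c+1) j
      = Aent x (c+1) (a+c+1) j
        + (Pf x c (a+c+1) / Pf x c (a+c)) * Aent x c (a+c) j := by
  unfold Aent
  rw [min_eq_left (by omega : c ≤ a+c+1), min_eq_left (by omega : c+1 ≤ a+c+1),
    min_eq_left (by omega : c ≤ a+c)]
  have e1 : a + c + 1 - c = a + 1 := by omega
  have e2 : a + c + 1 - (c+1) = a := by omega
  have e3 : a + c - c = a := by omega
  rw [e1, e2, e3]
  rw [Pf_succ x (by omega : c + 1 ≤ a+c+1), e2]
  have hdd : ddW x (c+1) a j = (ddW x c (a+1) j - ddW x c a j) / (x (a+c+1) - x a) :=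
    ddW_succ x c a j
  rw [hdd]
  have hP1 : Pf x c (a+c+1) ≠ 0 := ne_of_gt (Pf_pos hx (by omega))
  have hP0 : Pf x c (a+c) ≠ 0 := ne_of_gt (Pf_pos hx (by omega))
  have hΔ : x (a+c+1) - x a ≠ 0 := sub_ne' hx (by omega) (by omega)
  field_simp
  ring

/-! ### Elementary total positivity lemmas -/

lemma perm_le_apply {k : ℕ} (τ : Equiv.Perm (Fin k)) (hτ : StrictMono (⇑τ)) :
    ∀ i : Fin k, (i : ℕ) ≤ ((τ i : Fin k) : ℕ) := by
  have key : ∀ v : ℕ, ∀ i : Fin k, (i : ℕ) = v → v ≤ ((τ i : Fin k) : ℕ) := by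
    intro v
    induction v with
    | zero => intro i _; omega
    | succ v ihv =>
      intro i hi
      have hvk : v < k := by omega
      have hlt : (⟨v, hvk⟩ : Fin k) < i := by simp [Fin.lt_def]; omega
      have h1 : τ ⟨v, hvk⟩ < τ i := hτ hlt
      have h2 := ihv ⟨v, hvk⟩ rfl
      have := Fin.lt_def.mp h1
      omega
  intro i; exact key (i : ℕ) i rfl

lemma perm_strictMono_eq_id {k : ℕ} (σ : Equiv.Perm (Fin k)) (h : StrictMono (⇑σ)) :
    ∀ i, σ i = i := by
  have hinv : StrictMono (⇑σ⁻¹) := by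
    intro a b hab
    rcases lt_trichotomy (σ⁻¹ a) (σ⁻¹ b) with hl | he | hgt
    · exact hl
    · exfalso
      have : a = b := by
        have := congrArg σ he; simpa using this
      exact absurd (this ▸ hab) (lt_irrefl _)
    · exfalso
      have := h hgt
      simp at this
      exact absurd (lt_trans hab this) (lt_irrefl _)
  intro i
  have h1 := perm_le_apply σ h i
  have h2 := perm_le_apply σ⁻¹ hinv (σ i)
  simp at h2
  exact Fin.ext (by omega)

lemma tp_diagonal {m : ℕ} (d : Fin m → ℝ) (hd : ∀ i, 0 ≤ d i) :
    TotallyPositive (Matrix.diagonal d) := by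
  intro k f g hf hg
  by_cases hfg : ∀ a, f a = g a
  · have heq : (Matrix.diagonal d).submatrix f g = Matrix.diagonal (fun a => d (f a)) := by
      ext i j
      by_cases hij : i = j
      · subst hij; simp [Matrix.submatrix, hfg i]
      · have hne : f i ≠ g j := by
          intro hc
          exact hij (hg.injective ((hfg i) ▸ hc))
        simp [Matrix.submatrix, Matrix.diagonal, hne, hij]
    rw [heq, Matrix.det_diagonal]
    exact Finset.prod_nonneg fun a _ => hd (f a)
  · push_neg at hfg
    obtain ⟨a₀, ha₀⟩ := hfg
    have hz : ((Matrix.diagonal d).submatrix f g).det = 0 := by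
      rw [Matrix.det_apply]
      apply Finset.sum_eq_zero
      intro σ _
      by_cases hall : ∀ i, f (σ i) = g i
      · exfalso
        have hsm : StrictMono (⇑σ) := by
          intro p q hpq
          have : f (σ p) < f (σ q) := by rw [hall p, hall q]; exact hg hpq
          exact hf.lt_iff_lt.mp this
        have hid := perm_strictMono_eq_id σ hsm
        exact ha₀ (by rw [← hall a₀, hid a₀])
      · push_neg at hall
        obtain ⟨i, hi⟩ := hall
        have hzero : (Matrix.diagonal d).submatrix f g (σ i) i = 0 := by
          simp [Matrix.submatrix, Matrix.diagonal_apply_ne _ hi]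
        have hp : (∏ p, (Matrix.diagonal d).submatrix f g (σ p) p) = 0 :=
          Finset.prod_eq_zero (Finset.mem_univ i) hzero
        rw [hp, smul_zero]
    rw [hz]

lemma tp_rowop {m : ℕ} (A : Matrix (Fin m) (Fin m) ℝ) (hA : TotallyPositive A)
    (r₁ r₂ : Fin m) (hr : (r₁ : ℕ) + 1 = (r₂ : ℕ)) (c : ℝ) (hc : 0 ≤ c) :
    TotallyPositive (Matrix.of fun i j => if i = r₂ then A i j + c * A r₁ j else A i j) := by
  intro k f g hf hg
  by_cases hex : ∃ a, f a = r₂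
  · obtain ⟨a, ha⟩ := hex
    have hsub : (Matrix.of fun i j => if i = r₂ then A i j + c * A r₁ j else A i j).submatrix f g
        = Matrix.updateRow (A.submatrix f g) a
            ((fun j => A r₂ (g j)) + c • (fun j => A r₁ (g j))) := by
      ext i j
      by_cases hia : i = a
      · subst hia
        simp [Matrix.submatrix, ha, Matrix.updateRow_self]
      · have hne : f i ≠ r₂ := fun hc' => hia (hf.injective (by rw [hc', ha]))
        simp [Matrix.submatrix, hne, Matrix.updateRow_ne hia]
    rw [hsub, Matrix.det_updateRow_add, Matrix.det_updateRow_smul]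
    have h1 : Matrix.updateRow (A.submatrix f g) a (fun j => A r₂ (g j)) = A.submatrix f g := by
      have he : (fun j => A r₂ (g j)) = (A.submatrix f g) a := by
        funext j; simp [Matrix.submatrix, ha]
      rw [he, Matrix.updateRow_eq_self]
    rw [h1]
    have h2 : 0 ≤ (Matrix.updateRow (A.submatrix f g) a fun j => A r₁ (g j)).det := by
      by_cases hex1 : ∃ b, f b = r₁
      · obtain ⟨b, hb⟩ := hex1
        have hba : b ≠ a := by
          intro hba; subst hba
          rw [ha] at hb
          exact absurd (congrArg Fin.val hb) (by omega)
        have hz : (Matrix.updateRow (A.submatrix f g) a fun j => A r₁ (g j)).det = 0 := by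
          apply Matrix.det_zero_of_row_eq hba
          funext j
          simp [Matrix.updateRow_ne hba, Matrix.submatrix, hb, Matrix.updateRow_self]
        rw [hz]
      · push_neg at hex1
        have hupd : Matrix.updateRow (A.submatrix f g) a (fun j => A r₁ (g j))
            = A.submatrix (Function.update f a r₁) g := by
          ext i j
          by_cases hia : i = a
          · simp [hia, Matrix.updateRow_self, Matrix.submatrix, Function.update_self]
          · simp [Matrix.updateRow_ne hia, Matrix.submatrix, Function.update_of_ne hia]
        rw [hupd]
        apply hA
        · intro p q hpq
          rw [Function.update_apply, Function.update_apply]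
          have hr₂ : (f a : ℕ) = (r₂ : ℕ) := congrArg Fin.val ha
          split_ifs with h1' h2'
          · exact absurd hpq (by rw [h1', h2']; exact lt_irrefl a)
          · have hlt : f a < f q := by
              apply hf; rw [← h1']; exact hpq
            have hv := Fin.lt_def.mp hlt
            exact Fin.lt_def.mpr (by omega)
          · rename_i h2'
            have hlt : f p < f a := by
              apply hf; rw [← h2']; exact hpq
            have hv : (f p : ℕ) < (r₂ : ℕ) := by
              have := Fin.lt_def.mp hlt; omega
            have h4 : (f p : ℕ) ≠ (r₁ : ℕ) := fun hc' => hex1 p (Fin.ext hc')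
            exact Fin.lt_def.mpr (by omega)
          · exact hf hpq
        · exact hg
    have h3 := mul_nonneg hc h2
    have h4 := hA k f g hf hg
    linarith
  · push_neg at hex
    have heq : (Matrix.of fun i j => if i = r₂ then A i j + c * A r₁ j else A i j).submatrix f g
        = A.submatrix f g := by
      ext i j
      simp [Matrix.submatrix, hex i]
    rw [heq]
    exact hA k f g hf hg

/-! ### The main induction: total positivity of the Newton-times-sign matrix -/

lemma tp_A (hx : ∀ a b : ℕ, a < b → b ≤ n → x b < x a) :
    TotallyPositive (Matrix.of fun i j : Fin (n+1) => Aent x 0 i.val j.val) := by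
  set A : ℕ → Matrix (Fin (n+1)) (Fin (n+1)) ℝ :=
    fun c => Matrix.of fun i j => Aent x c i.val j.val with hA
  -- the final matrix is diagonal
  have hfinal : A n = Matrix.diagonal (fun i : Fin (n+1) => Pf x i.val i.val) := by
    ext i j
    have hmin : min n i.val = i.val := min_eq_right (by omega)
    show Aent x n i.val j.val = _
    unfold Aent
    rw [hmin]
    have e0 : i.val - i.val = 0 := by omega
    rw [e0]
    rcases lt_trichotomy (i.val) (j.val) with hlt | heq | hgt
    · rw [highcol i.val 0 j.val (by omega)]
      have hne : i ≠ j := by intro hij; subst hij; omega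
      simp [Matrix.diagonal_apply_ne _ hne]
    · have hij : i = j := Fin.ext heq
      subst hij
      rw [diagval hx i.val 0 (by omega)]
      simp only [Matrix.diagonal_apply_eq]
      have h2 : ((-1:ℝ))^(i.val) * ((-1:ℝ))^(i.val) = 1 := by
        rw [← pow_add]; exact Even.neg_one_pow ⟨i.val, rfl⟩
      linear_combination Pf x i.val i.val * h2
    · rw [lowdeg hx j.val i.val 0 hgt (by omega)]
      have hne : i ≠ j := by intro hij; subst hij; omega
      simp [Matrix.diagonal_apply_ne _ hne]
  -- the elimination step
  have hstep : ∀ c : ℕ, c + 1 ≤ n → TotallyPositive (A (c+1)) → TotallyPositive (A c) := by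
    intro c hc hTP1
    set C : ℕ → Matrix (Fin (n+1)) (Fin (n+1)) ℝ :=
      fun r => Matrix.of fun i j =>
        if i.val ≤ r then Aent x c i.val j.val else Aent x (c+1) i.val j.val with hC
    have hC0 : C c = A (c+1) := by
      ext i j
      show (if i.val ≤ c then Aent x c i.val j.val else Aent x (c+1) i.val j.val)
        = Aent x (c+1) i.val j.val
      by_cases hi : i.val ≤ c
      · rw [if_pos hi, Aent_small x hi]
      · rw [if_neg hi]
    have hCd : ∀ d : ℕ, c + d ≤ n → TotallyPositive (C (c + d)) := by
      intro d
      induction d with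
      | zero => intro _; rw [show c + 0 = c from rfl, hC0]; exact hTP1
      | succ d ihd =>
        intro hdn
        have hTPprev := ihd (by omega)
        have hr₂lt : c + d + 1 < n + 1 := by omega
        have hr₁lt : c + d < n + 1 := by omega
        set r₂ : Fin (n+1) := ⟨c+d+1, hr₂lt⟩ with hr₂
        set r₁ : Fin (n+1) := ⟨c+d, hr₁lt⟩ with hr₁
        set coef : ℝ := Pf x c (c+d+1) / Pf x c (c+d) with hcoef
        have hcoefnn : 0 ≤ coef :=
          div_nonneg (Pf_pos hx (by omega)).le (Pf_pos hx (by omega)).le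
        have hv2 : (r₂ : Fin (n+1)).val = c+d+1 := rfl
        have hv1 : (r₁ : Fin (n+1)).val = c+d := rfl
        have heq : C (c+d+1) = Matrix.of fun i j =>
            if i = r₂ then C (c+d) i j + coef * C (c+d) r₁ j else C (c+d) i j := by
          ext i j
          simp only [hC, Matrix.of_apply]
          by_cases hi : i = r₂
          · rw [if_pos hi, hi, hv2]
            rw [if_pos (le_refl (c+d+1)), if_neg (by omega : ¬ (c+d+1 ≤ c+d)),
              if_pos (le_refl (c+d))]
            have hF := F1 hx c d j.val (by omega)
            have e : d + c = c + d := by omega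
            rw [e] at hF
            rw [hcoef]
            exact hF
          · rw [if_neg hi]
            have hival : i.val ≠ c+d+1 := fun hval => hi (by exact Fin.ext hval)
            by_cases hile : i.val ≤ c+d
            · rw [if_pos (by omega), if_pos hile]
            · rw [if_neg (by omega), if_neg hile]
        show TotallyPositive (C (c+d+1))
        rw [heq]
        exact tp_rowop (C (c+d)) hTPprev r₁ r₂ rfl coef hcoefnn
    have hCn : C n = A c := by
      ext i j
      show (if i.val ≤ n then Aent x c i.val j.val else Aent x (c+1) i.val j.val)
        = Aent x c i.val j.val
      rw [if_pos (by omega)]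
    have := hCd (n - c) (by omega)
    rw [show c + (n - c) = n from by omega, hCn] at this
    exact this
  -- downward induction
  have hall : ∀ k : ℕ, k ≤ n → TotallyPositive (A (n - k)) := by
    intro k
    induction k with
    | zero =>
      intro _
      rw [show n - 0 = n from rfl, hfinal]
      exact tp_diagonal _ (fun i => (Pf_pos hx (by omega)).le)
    | succ k ihk =>
      intro hk
      have hprev := ihk (by omega)
      have hc : (n - (k+1)) + 1 = n - k := by omega
      apply hstep (n - (k+1)) (by omega)
      rw [hc]
      exact hprev
  have := hall n (le_refl n)
  rw [show n - n = 0 from by omega] at this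
  exact this

end NewtonTP

/-- with `J = diag(1, −1, 1, …)`, the matrix `L·J` is totally
positive iff the pairwise distinct nodes `t 1, …, t (n+1)` are in strictly
decreasing order, where `L` is the Newton collocation matrix. -/
theorem newton_collocation_times_J_totally_positive_iff_decreasing
    (n : ℕ) (hn : 1 ≤ n) (t : ℕ → ℝ)
    (ht : ∀ i j, 1 ≤ i → i ≤ n + 1 → 1 ≤ j → j ≤ n + 1 → i ≠ j → t i ≠ t j)
    (L : Matrix (Fin (n + 1)) (Fin (n + 1)) ℝ)
    (hL : ∀ i j, L i j = ∏ k ∈ Finset.Icc 1 j.val, (t (i.val + 1) - t k))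
    (J : Matrix (Fin (n + 1)) (Fin (n + 1)) ℝ)
    (hJ : J = Matrix.diagonal fun i : Fin (n + 1) => (-1 : ℝ) ^ (i : ℕ)) :
    TotallyPositive (L * J) ↔ ∀ i j, 1 ≤ i → i < j → j ≤ n + 1 → t j < t i := by
  classical
  set x : ℕ → ℝ := fun a => t (a+1) with hxdef
  have hM : ∀ i j : Fin (n+1), (L * J) i j = ∏ k ∈ Finset.range j.val, (x k - x i.val) := by
    intro i j
    rw [hJ, Matrix.mul_diagonal, hL]
    have h1 : ∏ k ∈ Finset.Icc 1 j.val, (t (i.val+1) - t k)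
        = ∏ k ∈ Finset.range j.val, (t (i.val+1) - t (1+k)) := by
      rw [← Finset.Ico_add_one_right_eq_Icc, Finset.prod_Ico_eq_prod_range]
      simp
    rw [h1]
    have h2 : ((-1:ℝ)) ^ j.val = ∏ _k ∈ Finset.range j.val, (-1 : ℝ) := by
      rw [Finset.prod_const, Finset.card_range]
    rw [h2, ← Finset.prod_mul_distrib]
    apply Finset.prod_congr rfl
    intro k _
    show (t (i.val+1) - t (1+k)) * (-1) = x k - x i.val
    rw [hxdef]
    show (t (i.val+1) - t (1+k)) * (-1) = t (k+1) - t (i.val+1)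
    rw [show 1 + k = k + 1 from by omega]
    ring
  constructor
  · -- total positivity implies decreasing
    intro hTP
    have hsm1 : ∀ (v : Fin (n+1)), StrictMono (fun _ : Fin 1 => v) := by
      intro v a b hab
      exact absurd hab (by rw [Subsingleton.elim a b]; exact lt_irrefl b)
    have hent : ∀ i j : Fin (n+1), 0 ≤ (L * J) i j := by
      intro i j
      have := hTP 1 (fun _ => i) (fun _ => j) (hsm1 i) (hsm1 j)
      rwa [Matrix.det_fin_one, Matrix.submatrix_apply] at this
    have main : ∀ p : ℕ, ∀ q : ℕ, p < q → q ≤ n → x q < x p := by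
      intro p
      induction p using Nat.strong_induction_on with
      | _ p ih =>
        intro q hpq hq
        have hq1 : q < n + 1 := by omega
        have hp1 : p + 1 < n + 1 := by omega
        have he := hent ⟨q, hq1⟩ ⟨p+1, hp1⟩
        rw [hM] at he
        simp only [Fin.val_mk] at he
        rw [Finset.prod_range_succ] at he
        have hpos : 0 < ∏ k ∈ Finset.range p, (x k - x q) := by
          apply Finset.prod_pos
          intro k hk
          rw [Finset.mem_range] at hk
          have := ih k hk q (by omega) hq
          linarith
        have hge : 0 ≤ x p - x q := by
          by_contra hcon
          push_neg at hcon
          nlinarith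
        have hne : x p ≠ x q := by
          have := ht (p+1) (q+1) (by omega) (by omega) (by omega) (by omega) (by omega)
          exact this
        have hle : x q ≤ x p := by linarith
        exact lt_of_le_of_ne hle (fun hqe => hne hqe.symm)
    intro i j hi hij hj
    have := main (i-1) (j-1) (by omega) (by omega)
    rw [hxdef] at this
    simp only at this
    rw [show i - 1 + 1 = i from by omega, show j - 1 + 1 = j from by omega] at this
    exact this
  · -- decreasing implies total positivity
    intro hdec
    have hx : ∀ a b : ℕ, a < b → b ≤ n → x b < x a := by
      intro a b hab hb
      exact hdec (a+1) (b+1) (by omega) (by omega) (by omega)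
    have hLJ : L * J = Matrix.of fun i j : Fin (n+1) => NewtonTP.Aent x 0 i.val j.val := by
      ext i j
      simp only [Matrix.of_apply]
      rw [hM i j, NewtonTP.Aent_zero, NewtonTP.ddW_zero]
    rw [hLJ]
    exact NewtonTP.tp_A hx
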